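/- Let f(X_1,…,X_n) be a function of n mutually independent {0,1}-valued random variables satisfying the Lipschitz property with constants d_1,…,d_n, and suppose that for each i and each assignment X_{−i} of the other variables, the conditional variance Var[f | X_{−i}] is at most λ_i. Let λ = Σ_i λ_i and d = max_i d_i. Then for all t > 0, Pr[f ≥ E[f] + t] ≤ exp(−t²/(2λ + (2/3)·t·d)) and Pr[f ≤ E[f] − t] ≤ exp(−t²/(2λ + (2/3)·t·d)). -/

import Mathlib

open MeasureTheory Real Filter
open scoped ENNReal

lemma exp_tsum (x : ℝ) : Real.exp x = ∑' n : ℕ, x ^ n / n.factorial := by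
  rw [Real.exp_eq_exp_ℝ, NormedSpace.exp_eq_tsum_div]

lemma summable_phi (x : ℝ) : Summable (fun n : ℕ => x ^ (n + 2) / (n + 2).factorial) :=
  (summable_nat_add_iff 2).2 (Real.summable_pow_div_factorial x)

lemma phi_tsum (x : ℝ) :
    Real.exp x - 1 - x = ∑' n : ℕ, x ^ (n + 2) / (n + 2).factorial := by
  have h2 := Summable.sum_add_tsum_nat_add (f := fun n : ℕ => x ^ n / n.factorial) 2
    (Real.summable_pow_div_factorial x)
  rw [exp_tsum x, ← h2]
  simp [Finset.sum_range_succ]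
  ring

lemma quad_le_exp {c : ℝ} (hc : 0 ≤ c) : 1 + c + c ^ 2 / 2 ≤ Real.exp c := by
  have h := Summable.le_tsum (summable_phi c) 0
    (fun n _ => by positivity)
  have : (c:ℝ) ^ (0 + 2) / (0+2).factorial = c ^ 2 / 2 := by norm_num
  rw [this] at h
  rw [← phi_tsum c] at h
  linarith

lemma exp_le_quad_neg {x : ℝ} (hx : x ≤ 0) : Real.exp x ≤ 1 + x + x ^ 2 / 2 := by
  have hq := quad_le_exp (c := -x) (by linarith)
  have hmul : Real.exp x * Real.exp (-x) = 1 := by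
    rw [← Real.exp_add]; simp
  have hpos : (0:ℝ) < 1 + (-x) + (-x) ^ 2 / 2 := by nlinarith
  have h1 : Real.exp x * (1 + (-x) + (-x) ^ 2 / 2) ≤ 1 := by
    calc Real.exp x * (1 + (-x) + (-x) ^ 2 / 2) ≤ Real.exp x * Real.exp (-x) :=
      mul_le_mul_of_nonneg_left hq (Real.exp_pos x).le
    _ = 1 := hmul
  have h2 : (1:ℝ) ≤ (1 + x + x ^ 2 / 2) * (1 + (-x) + (-x) ^ 2 / 2) := by nlinarith [sq_nonneg x, sq_nonneg (x^2)]
  nlinarith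

lemma h_mono {x c : ℝ} (hx : 0 ≤ x) (hxc : x ≤ c) :
    c ^ 2 * (Real.exp x - 1 - x) ≤ x ^ 2 * (Real.exp c - 1 - c) := by
  have hc : 0 ≤ c := hx.trans hxc
  rw [phi_tsum x, phi_tsum c, ← tsum_mul_left, ← tsum_mul_left]
  refine Summable.tsum_le_tsum (fun n => ?_) ((summable_phi x).mul_left _) ((summable_phi c).mul_left _)
  have key : c ^ 2 * x ^ (n + 2) ≤ x ^ 2 * c ^ (n + 2) := by
    have h1 : x ^ n ≤ c ^ n := pow_le_pow_left₀ hx hxc n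
    calc c ^ 2 * x ^ (n + 2) = (x ^ 2 * c ^ 2) * x ^ n := by ring
    _ ≤ (x ^ 2 * c ^ 2) * c ^ n := by
        apply mul_le_mul_of_nonneg_left h1; positivity
    _ = x ^ 2 * c ^ (n + 2) := by ring
  rw [mul_div_assoc', mul_div_assoc']
  exact div_le_div_of_nonneg_right key (by positivity)

lemma bennett_ptwise {c x : ℝ} (hc : 0 < c) (hx : x ≤ c) :
    Real.exp x ≤ 1 + x + x ^ 2 * ((Real.exp c - 1 - c) / c ^ 2) := by
  have hG : (1:ℝ)/2 ≤ (Real.exp c - 1 - c) / c ^ 2 := by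
    rw [le_div_iff₀ (by positivity)]
    have := quad_le_exp hc.le
    nlinarith
  rcases le_or_gt 0 x with h0 | h0
  · have := h_mono h0 hx
    have h2 : Real.exp x - 1 - x ≤ x ^ 2 * ((Real.exp c - 1 - c) / c ^ 2) := by
      rw [mul_div_assoc']
      rw [le_div_iff₀ (by positivity)]
      nlinarith
    linarith
  · have h1 := exp_le_quad_neg h0.le
    nlinarith [sq_nonneg x]

lemma fact_ge : ∀ n : ℕ, 2 * 3 ^ n ≤ (n + 2).factorial := by
  intro n
  induction n with
  | zero => simp [Nat.factorial]
  | succ k ih =>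
      have : (k + 3).factorial = (k + 3) * (k + 2).factorial := rfl
      calc 2 * 3 ^ (k + 1) = 3 * (2 * 3 ^ k) := by ring
      _ ≤ 3 * (k + 2).factorial := by omega
      _ ≤ (k + 3) * (k + 2).factorial := by
          exact Nat.mul_le_mul_right _ (by omega)
      _ = (k + 3).factorial := this.symm

lemma phi_le {u : ℝ} (h0 : 0 ≤ u) (h3 : u < 3) :
    Real.exp u - 1 - u ≤ u ^ 2 / (2 * (1 - u / 3)) := by
  have hu3 : u / 3 < 1 := by linarith
  have hu3' : (0:ℝ) ≤ u / 3 := by linarith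
  have hgeom : ∑' n : ℕ, (u / 3) ^ n = (1 - u / 3)⁻¹ :=
    tsum_geometric_of_lt_one hu3' hu3
  have hsum_g : Summable (fun n : ℕ => (u / 3) ^ n) := summable_geometric_of_lt_one hu3' hu3
  have key : ∑' n : ℕ, u ^ (n + 2) / (n + 2).factorial ≤ ∑' n : ℕ, u ^ 2 / 2 * (u / 3) ^ n := by
    refine Summable.tsum_le_tsum (fun n => ?_) (summable_phi u) (hsum_g.mul_left _)
    have h1 : u ^ 2 / 2 * (u / 3) ^ n = u ^ (n + 2) / (2 * 3 ^ n) := by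
      rw [div_pow]
      ring
    rw [h1]
    apply div_le_div_of_nonneg_left (by positivity) (by positivity)
    · exact_mod_cast fact_ge n
  rw [phi_tsum u]
  calc (∑' n : ℕ, u ^ (n + 2) / (n + 2).factorial) ≤ ∑' n : ℕ, u ^ 2 / 2 * (u / 3) ^ n := key
  _ = u ^ 2 / 2 * (1 - u / 3)⁻¹ := by rw [tsum_mul_left, hgeom]
  _ = u ^ 2 / (2 * (1 - u / 3)) := by
      rw [div_mul_eq_mul_div, mul_comm]
      field_simp

lemma bennett_two {p A B D L s : ℝ} (hp0 : 0 ≤ p) (hp1 : p ≤ 1) (hD : 0 < D)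
    (hs : 0 < s) (hAB : |B - A| ≤ D) (hL : p * (1 - p) * (B - A) ^ 2 ≤ L) :
    (1 - p) * Real.exp (s * A) + p * Real.exp (s * B) ≤
      Real.exp (L * ((Real.exp (s * D) - 1 - s * D) / D ^ 2)) *
        Real.exp (s * ((1 - p) * A + p * B)) := by
  set m := (1 - p) * A + p * B with hm
  set c := s * D with hcdef
  have hc : 0 < c := by positivity
  set hcv := (Real.exp c - 1 - c) / c ^ 2 with hhc
  have habs := abs_le.1 hAB
  have hx1 : s * (A - m) ≤ c := by
    have : A - m = p * (A - B) := by rw [hm]; ring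
    rw [this, hcdef]
    have h1 : p * (A - B) ≤ p * D := by nlinarith
    nlinarith
  have hx2 : s * (B - m) ≤ c := by
    have : B - m = (1 - p) * (B - A) := by rw [hm]; ring
    rw [this, hcdef]
    have h1 : (1 - p) * (B - A) ≤ (1 - p) * D := by nlinarith
    nlinarith
  have e1 := bennett_ptwise hc hx1
  have e2 := bennett_ptwise hc hx2
  have hcv0 : 0 ≤ hcv := by
    rw [hhc]
    exact div_nonneg (by linarith [Real.add_one_le_exp c]) (by positivity)
  have hsplitA : Real.exp (s * A) = Real.exp (s * m) * Real.exp (s * (A - m)) := by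
    rw [← Real.exp_add]; ring_nf
  have hsplitB : Real.exp (s * B) = Real.exp (s * m) * Real.exp (s * (B - m)) := by
    rw [← Real.exp_add]; ring_nf
  have hcomb : (1 - p) * Real.exp (s * (A - m)) + p * Real.exp (s * (B - m)) ≤
      1 + s ^ 2 * (p * (1 - p) * (B - A) ^ 2) * hcv := by
    have t1 : (1 - p) * Real.exp (s * (A - m)) ≤
        (1 - p) * (1 + s * (A - m) + (s * (A - m)) ^ 2 * hcv) := by
      apply mul_le_mul_of_nonneg_left e1 (by linarith)
    have t2 : p * Real.exp (s * (B - m)) ≤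
        p * (1 + s * (B - m) + (s * (B - m)) ^ 2 * hcv) := by
      apply mul_le_mul_of_nonneg_left e2 hp0
    have hid : (1 - p) * (1 + s * (A - m) + (s * (A - m)) ^ 2 * hcv) +
        p * (1 + s * (B - m) + (s * (B - m)) ^ 2 * hcv) =
        1 + s ^ 2 * (p * (1 - p) * (B - A) ^ 2) * hcv := by
      rw [hm]; ring
    linarith
  have hstep : 1 + s ^ 2 * (p * (1 - p) * (B - A) ^ 2) * hcv ≤
      Real.exp (L * ((Real.exp (s * D) - 1 - s * D) / D ^ 2)) := by
    have h1 : s ^ 2 * (p * (1 - p) * (B - A) ^ 2) * hcv ≤ s ^ 2 * L * hcv :=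
      mul_le_mul_of_nonneg_right (mul_le_mul_of_nonneg_left hL (sq_nonneg s)) hcv0
    have h2 : s ^ 2 * L * hcv = L * ((Real.exp (s * D) - 1 - s * D) / D ^ 2) := by
      rw [hhc, hcdef]
      field_simp
    calc 1 + s ^ 2 * (p * (1 - p) * (B - A) ^ 2) * hcv ≤ 1 + s ^ 2 * L * hcv := by linarith
    _ ≤ Real.exp (s ^ 2 * L * hcv) := by
        have := Real.add_one_le_exp (s ^ 2 * L * hcv); linarith
    _ = _ := by rw [h2]
  calc (1 - p) * Real.exp (s * A) + p * Real.exp (s * B)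
      = Real.exp (s * m) * ((1 - p) * Real.exp (s * (A - m)) + p * Real.exp (s * (B - m))) := by
        rw [hsplitA, hsplitB]; ring
  _ ≤ Real.exp (s * m) * (1 + s ^ 2 * (p * (1 - p) * (B - A) ^ 2) * hcv) := by
      apply mul_le_mul_of_nonneg_left hcomb (Real.exp_pos _).le
  _ ≤ Real.exp (s * m) * Real.exp (L * ((Real.exp (s * D) - 1 - s * D) / D ^ 2)) := by
      apply mul_le_mul_of_nonneg_left hstep (Real.exp_pos _).le
  _ = _ := by rw [mul_comm]

noncomputable def Wt {n : ℕ} (p : Fin n → ℝ) (σ : Fin n → Bool) : ℝ :=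
  ∏ i, (if σ i then p i else 1 - p i)

lemma Wt_nonneg {n : ℕ} {p : Fin n → ℝ} (hp : ∀ i, 0 ≤ p i ∧ p i ≤ 1)
    (σ : Fin n → Bool) : 0 ≤ Wt p σ := by
  apply Finset.prod_nonneg
  intro i _
  rcases hp i with ⟨h0, h1⟩
  split <;> linarith

lemma Wt_cons {n : ℕ} (p : Fin (n+1) → ℝ) (b : Bool) (u : Fin n → Bool) :
    Wt p (Fin.cons b u) = (if b then p 0 else 1 - p 0) * Wt (fun i => p i.succ) u := by
  simp [Wt, Fin.prod_univ_succ]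

lemma sum_split {n : ℕ} (g : (Fin (n+1) → Bool) → ℝ) :
    ∑ σ, g σ = ∑ u : Fin n → Bool, (g (Fin.cons false u) + g (Fin.cons true u)) := by
  rw [← Equiv.sum_comp (Fin.consEquiv (fun _ => Bool)) g]
  rw [Fintype.sum_prod_type]
  rw [Fintype.sum_bool]
  rw [← Finset.sum_add_distrib]
  congr 1
  ext u
  rw [add_comm]
  rfl

lemma mgf_bound (s D : ℝ) (hs : 0 < s) (hD : 0 < D) :
    ∀ (n : ℕ) (p lam : Fin n → ℝ), (∀ i, 0 ≤ p i ∧ p i ≤ 1) →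
    ∀ (F : (Fin n → Bool) → ℝ),
    (∀ (i : Fin n) (σ : Fin n → Bool),
      |F (Function.update σ i true) - F (Function.update σ i false)| ≤ D) →
    (∀ (i : Fin n) (σ : Fin n → Bool),
      p i * (1 - p i) * (F (Function.update σ i true) - F (Function.update σ i false)) ^ 2
        ≤ lam i) →
    ∑ σ, Wt p σ * Real.exp (s * F σ) ≤
      Real.exp (s * (∑ σ, Wt p σ * F σ) +
        (∑ i, lam i) * ((Real.exp (s * D) - 1 - s * D) / D ^ 2)) := by
  intro n
  induction n with
  | zero =>
      intro p lam hp F hL hv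
      have hu : ∀ σ : Fin 0 → Bool, σ = default := fun σ => Subsingleton.elim _ _
      rw [Fintype.sum_unique, Fintype.sum_unique]
      have hw : ∀ σ, Wt p σ = 1 := fun σ => by simp [Wt]
      rw [hw]
      simp
  | succ n ih =>
      intro p lam hp F hL hv
      set G := (Real.exp (s * D) - 1 - s * D) / D ^ 2 with hG
      set p' : Fin n → ℝ := fun i => p i.succ with hp'def
      set lam' : Fin n → ℝ := fun i => lam i.succ with hlam'def
      set F' : (Fin n → Bool) → ℝ :=
        fun u => (1 - p 0) * F (Fin.cons false u) + p 0 * F (Fin.cons true u) with hF'def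
      have hp0 := (hp 0).1
      have hp1 := (hp 0).2
      have hp' : ∀ i, 0 ≤ p' i ∧ p' i ≤ 1 := fun i => hp i.succ
      -- Lipschitz and variance for F'
      have key : ∀ (i : Fin n) (u : Fin n → Bool),
          (F' (Function.update u i true) - F' (Function.update u i false)) =
          (1 - p 0) * (F (Function.update (Fin.cons false u) i.succ true)
            - F (Function.update (Fin.cons false u) i.succ false))
          + p 0 * (F (Function.update (Fin.cons true u) i.succ true)
            - F (Function.update (Fin.cons true u) i.succ false)) := by
        intro i u
        rw [hF'def]
        simp only [← Fin.cons_update]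
        ring
      have hF'L : ∀ (i : Fin n) (u : Fin n → Bool),
          |F' (Function.update u i true) - F' (Function.update u i false)| ≤ D := by
        intro i u
        rw [key i u]
        have h1 := abs_le.1 (hL i.succ (Fin.cons false u))
        have h2 := abs_le.1 (hL i.succ (Fin.cons true u))
        rw [abs_le]
        constructor <;> nlinarith [h1.1, h1.2, h2.1, h2.2]
      have hF'v : ∀ (i : Fin n) (u : Fin n → Bool),
          p' i * (1 - p' i) * (F' (Function.update u i true) - F' (Function.update u i false)) ^ 2
            ≤ lam' i := by
        intro i u
        rw [key i u]
        set a := F (Function.update (Fin.cons false u) i.succ true)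
          - F (Function.update (Fin.cons false u) i.succ false) with ha
        set b := F (Function.update (Fin.cons true u) i.succ true)
          - F (Function.update (Fin.cons true u) i.succ false) with hb
        have hq : 0 ≤ p' i * (1 - p' i) := by
          rcases hp' i with ⟨h0, h1⟩; nlinarith
        have hva := hv i.succ (Fin.cons false u)
        have hvb := hv i.succ (Fin.cons true u)
        have hjensen : p' i * (1 - p' i) * ((1 - p 0) * a + p 0 * b) ^ 2 ≤
            (1 - p 0) * (p' i * (1 - p' i) * a ^ 2) + p 0 * (p' i * (1 - p' i) * b ^ 2) := by
          have hdiff : (1 - p 0) * (p' i * (1 - p' i) * a ^ 2)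
              + p 0 * (p' i * (1 - p' i) * b ^ 2)
              - p' i * (1 - p' i) * ((1 - p 0) * a + p 0 * b) ^ 2
              = (p' i * (1 - p' i)) * (p 0 * (1 - p 0)) * (a - b) ^ 2 := by ring
          nlinarith [mul_nonneg (mul_nonneg hq (mul_nonneg hp0 (by linarith : (0:ℝ) ≤ 1 - p 0))) (sq_nonneg (a - b))]
        calc p' i * (1 - p' i) * ((1 - p 0) * a + p 0 * b) ^ 2
            ≤ (1 - p 0) * (p' i * (1 - p' i) * a ^ 2) + p 0 * (p' i * (1 - p' i) * b ^ 2) := hjensen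
        _ ≤ (1 - p 0) * lam' i + p 0 * lam' i := by
            have e1 : p' i * (1 - p' i) * a ^ 2 ≤ lam' i := hva
            have e2 : p' i * (1 - p' i) * b ^ 2 ≤ lam' i := hvb
            have := mul_le_mul_of_nonneg_left e1 (by linarith : (0:ℝ) ≤ 1 - p 0)
            have := mul_le_mul_of_nonneg_left e2 hp0
            linarith
        _ = lam' i := by ring
      -- per-u Bennett
      have hben : ∀ u : Fin n → Bool,
          Wt p (Fin.cons false u) * Real.exp (s * F (Fin.cons false u))
          + Wt p (Fin.cons true u) * Real.exp (s * F (Fin.cons true u))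
          ≤ Wt p' u * (Real.exp (lam 0 * G) * Real.exp (s * F' u)) := by
        intro u
        have hA : Function.update ((Fin.cons false u) : Fin (n+1) → Bool) 0 true
            = (Fin.cons true u : Fin (n+1) → Bool) := by
          simp [Fin.update_cons_zero]
        have hB : Function.update ((Fin.cons false u) : Fin (n+1) → Bool) 0 false
            = (Fin.cons false u : Fin (n+1) → Bool) := by
          simp [Fin.update_cons_zero]
        have hAB : |F (Fin.cons true u) - F (Fin.cons false u)| ≤ D := by
          have := hL 0 (Fin.cons false u); rwa [hA, hB] at this
        have hLvar : p 0 * (1 - p 0) * (F (Fin.cons true u) - F (Fin.cons false u)) ^ 2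
            ≤ lam 0 := by
          have := hv 0 (Fin.cons false u); rwa [hA, hB] at this
        have hb := bennett_two hp0 hp1 hD hs hAB hLvar
        rw [Wt_cons, Wt_cons]
        norm_num
        calc (1 - p 0) * Wt p' u * Real.exp (s * F (Fin.cons false u))
            + p 0 * Wt p' u * Real.exp (s * F (Fin.cons true u))
            = Wt p' u * ((1 - p 0) * Real.exp (s * F (Fin.cons false u))
              + p 0 * Real.exp (s * F (Fin.cons true u))) := by ring
        _ ≤ Wt p' u * (Real.exp (lam 0 * G) * Real.exp (s * F' u)) := by
            apply mul_le_mul_of_nonneg_left _ (Wt_nonneg hp' u)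
            exact hb
        _ = _ := rfl
      -- mean identity
      have hmean : ∑ u : Fin n → Bool, Wt p' u * F' u = ∑ σ, Wt p σ * F σ := by
        rw [sum_split (fun σ => Wt p σ * F σ)]
        congr 1
        ext u
        rw [Wt_cons, Wt_cons]
        norm_num
        rw [hF'def]
        ring
      have ihapp := ih p' lam' hp' F' hF'L hF'v
      calc ∑ σ, Wt p σ * Real.exp (s * F σ)
          = ∑ u : Fin n → Bool, (Wt p (Fin.cons false u) * Real.exp (s * F (Fin.cons false u))
            + Wt p (Fin.cons true u) * Real.exp (s * F (Fin.cons true u))) :=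
            sum_split _
      _ ≤ ∑ u : Fin n → Bool, Wt p' u * (Real.exp (lam 0 * G) * Real.exp (s * F' u)) :=
          Finset.sum_le_sum (fun u _ => hben u)
      _ = Real.exp (lam 0 * G) * ∑ u : Fin n → Bool, Wt p' u * Real.exp (s * F' u) := by
          rw [Finset.mul_sum]; congr 1; ext u; ring
      _ ≤ Real.exp (lam 0 * G) *
            Real.exp (s * (∑ u : Fin n → Bool, Wt p' u * F' u) + (∑ i, lam' i) * G) := by
          apply mul_le_mul_of_nonneg_left ihapp (Real.exp_pos _).le
      _ = Real.exp (s * (∑ σ, Wt p σ * F σ) + (∑ i, lam i) * G) := by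
          rw [← Real.exp_add, hmean, Fin.sum_univ_succ (f := lam)]
          ring_nf
          rfl



lemma discrete_tail (n : ℕ) (p lam : Fin n → ℝ) (hp : ∀ i, 0 ≤ p i ∧ p i ≤ 1)
    (F : (Fin n → Bool) → ℝ) (D : ℝ) (hD : 0 < D)
    (hL : ∀ (i : Fin n) (σ : Fin n → Bool),
      |F (Function.update σ i true) - F (Function.update σ i false)| ≤ D)
    (hv : ∀ (i : Fin n) (σ : Fin n → Bool),
      p i * (1 - p i) * (F (Function.update σ i true) - F (Function.update σ i false)) ^ 2
        ≤ lam i)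
    (t : ℝ) (ht : 0 < t) :
    ∑ σ ∈ Finset.univ.filter (fun σ => (∑ τ, Wt p τ * F τ) + t ≤ F σ), Wt p σ
      ≤ Real.exp (-(t ^ 2) / (2 * (∑ i, lam i) + 2 / 3 * t * D)) := by
  set Λ := ∑ i, lam i with hΛ
  have hlam0 : ∀ i, 0 ≤ lam i := by
    intro i
    refine le_trans ?_ (hv i (fun _ => false))
    have h1 := (hp i).1
    have h2 := (hp i).2
    exact mul_nonneg (mul_nonneg h1 (by linarith)) (sq_nonneg _)
  have hΛ0 : 0 ≤ Λ := Finset.sum_nonneg (fun i _ => hlam0 i)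
  set den := Λ + t * D / 3 with hdendef
  have hden : 0 < den := by positivity
  set s := t / den with hsdef
  have hs : 0 < s := by positivity
  set m := ∑ τ, Wt p τ * F τ with hm
  set G := (Real.exp (s * D) - 1 - s * D) / D ^ 2 with hG
  -- Chernoff / Markov step
  have markov : ∑ σ ∈ Finset.univ.filter (fun σ => m + t ≤ F σ), Wt p σ
      ≤ Real.exp (Λ * G - s * t) := by
    have step1 : ∑ σ ∈ Finset.univ.filter (fun σ => m + t ≤ F σ), Wt p σ
        ≤ ∑ σ ∈ Finset.univ.filter (fun σ => m + t ≤ F σ),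
            Wt p σ * Real.exp (s * (F σ - m - t)) := by
      apply Finset.sum_le_sum
      intro σ hσ
      rw [Finset.mem_filter] at hσ
      have h1 : (1:ℝ) ≤ Real.exp (s * (F σ - m - t)) := by
        rw [Real.one_le_exp_iff]
        have := hσ.2
        nlinarith
      nlinarith [Wt_nonneg hp σ, h1]
    have step2 : ∑ σ ∈ Finset.univ.filter (fun σ => m + t ≤ F σ),
          Wt p σ * Real.exp (s * (F σ - m - t))
        ≤ ∑ σ, Wt p σ * Real.exp (s * (F σ - m - t)) := by
      apply Finset.sum_le_sum_of_subset_of_nonneg (Finset.filter_subset _ _)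
      intro σ _ _
      exact mul_nonneg (Wt_nonneg hp σ) (Real.exp_pos _).le
    have step3 : ∑ σ, Wt p σ * Real.exp (s * (F σ - m - t))
        = Real.exp (-(s * (m + t))) * ∑ σ, Wt p σ * Real.exp (s * F σ) := by
      rw [Finset.mul_sum]
      congr 1
      ext σ
      have hx : Real.exp (s * (F σ - m - t))
          = Real.exp (-(s * (m + t))) * Real.exp (s * F σ) := by
        rw [← Real.exp_add]; ring_nf
      rw [hx]
      ring
    have step4 := mgf_bound s D hs hD n p lam hp F hL hv
    calc ∑ σ ∈ Finset.univ.filter (fun σ => m + t ≤ F σ), Wt p σ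
        ≤ ∑ σ ∈ Finset.univ.filter (fun σ => m + t ≤ F σ),
            Wt p σ * Real.exp (s * (F σ - m - t)) := step1
    _ ≤ ∑ σ, Wt p σ * Real.exp (s * (F σ - m - t)) := step2
    _ = Real.exp (-(s * (m + t))) * ∑ σ, Wt p σ * Real.exp (s * F σ) := step3
    _ ≤ Real.exp (-(s * (m + t))) * Real.exp (s * m + Λ * G) := by
        apply mul_le_mul_of_nonneg_left step4 (Real.exp_pos _).le
    _ = Real.exp (Λ * G - s * t) := by
        rw [← Real.exp_add]; ring_nf
  -- arithmetic: Λ * G - s * t ≤ -(t^2)/(2*Λ + 2/3*t*D)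
  have hst : s * t = t ^ 2 / den := by rw [hsdef]; ring
  have harith : Λ * G - s * t ≤ -(t ^ 2) / (2 * Λ + 2 / 3 * t * D) := by
    have hden2 : 2 * Λ + 2 / 3 * t * D = 2 * den := by rw [hdendef]; ring
    rw [hden2]
    have hkey : Λ * G ≤ t ^ 2 / (2 * den) := by
      rcases eq_or_lt_of_le hΛ0 with h0 | hpos
      · rw [← h0]
        have : (0:ℝ) ≤ t ^ 2 / (2 * den) := by positivity
        linarith
      · have hu0 : 0 ≤ s * D := by positivity
        have hu3 : s * D < 3 := by
          rw [hsdef, div_mul_eq_mul_div, div_lt_iff₀ hden]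
          rw [hdendef]
          nlinarith
        have hphi := phi_le hu0 hu3
        have h13 : 1 - (s * D) / 3 = Λ / den := by
          rw [hsdef]
          field_simp
          ring
        rw [h13] at hphi
        have hG' : G ≤ (s * D) ^ 2 / (2 * (Λ / den)) / D ^ 2 := by
          rw [hG]
          exact div_le_div_of_nonneg_right hphi (by positivity)
        have hfin : Λ * ((s * D) ^ 2 / (2 * (Λ / den)) / D ^ 2) = t ^ 2 / (2 * den) := by
          rw [hsdef]
          field_simp
        calc Λ * G ≤ Λ * ((s * D) ^ 2 / (2 * (Λ / den)) / D ^ 2) :=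
          mul_le_mul_of_nonneg_left hG' hΛ0
        _ = t ^ 2 / (2 * den) := hfin
    rw [hst]
    have : -(t ^ 2) / (2 * den) = t ^ 2 / (2 * den) - t ^ 2 / den := by
      field_simp
      ring
    rw [this]
    linarith
  calc ∑ σ ∈ Finset.univ.filter (fun σ => m + t ≤ F σ), Wt p σ
      ≤ Real.exp (Λ * G - s * t) := markov
  _ ≤ Real.exp (-(t ^ 2) / (2 * Λ + 2 / 3 * t * D)) := Real.exp_le_exp.2 harith



theorem main_tail
    {Ω : Type*} [MeasurableSpace Ω] (μ : Measure Ω) [IsProbabilityMeasure μ]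
    (n : ℕ) (X : Fin n → Ω → ℝ) (f : (Fin n → ℝ) → ℝ)
    (d lam p : Fin n → ℝ)
    (hmeas : ∀ i, Measurable (X i))
    (h01 : ∀ i ω, X i ω = 0 ∨ X i ω = 1)
    (hind : ProbabilityTheory.iIndepFun X μ)
    (hp : ∀ i, (μ {ω | X i ω = 1}).toReal = p i)
    (hLip : ∀ (a a' : Fin n → ℝ) (i : Fin n),
      (∀ j, j ≠ i → a j = a' j) → |f a - f a'| ≤ d i)
    (hvar : ∀ (i : Fin n) (a : Fin n → ℝ), (∀ j, a j = 0 ∨ a j = 1) →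
      p i * (1 - p i) * (f (Function.update a i 1) - f (Function.update a i 0)) ^ 2 ≤ lam i)
    (lamS dmax : ℝ) (hlamS : lamS = ∑ i, lam i) (hdmax : ∀ i, d i ≤ dmax)
    (t : ℝ) (ht : 0 < t) :
    (μ {ω | (∫ ω', f (fun i => X i ω') ∂μ) + t ≤ f (fun i => X i ω)}).toReal ≤
        Real.exp (-(t ^ 2) / (2 * lamS + 2 / 3 * t * dmax)) := by
  classical
  rcases Nat.eq_zero_or_pos n with hn | hn
  · -- n = 0 : f ∘ X is constant, the tail event is empty
    subst hn
    have hconst : ∀ ω ω' : Ω, f (fun i => X i ω) = f (fun i => X i ω') :=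
      fun ω ω' => congrArg f (funext fun i => i.elim0)
    have hset : {ω | (∫ ω', f (fun i => X i ω') ∂μ) + t ≤ f (fun i => X i ω)} = ∅ := by
      ext ω
      simp only [Set.mem_setOf_eq, Set.mem_empty_iff_false, iff_false, not_le]
      have hfun : (fun ω' => f (fun i => X i ω')) = fun _ => f (fun i => X i ω) :=
        funext fun ω' => hconst ω' ω
      rw [hfun, integral_const]
      simp [measure_univ]
      linarith
    rw [hset]
    simp only [measure_empty, ENNReal.toReal_zero]
    exact (Real.exp_pos _).le
  -- n > 0
  have i0 : Fin n := ⟨0, hn⟩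
  have hd0 : 0 ≤ dmax := by
    have h := hLip (fun _ => 0) (fun _ => 0) i0 (fun _ _ => rfl)
    simp at h
    linarith [hdmax i0]
  have hp01 : ∀ i, 0 ≤ p i ∧ p i ≤ 1 := by
    intro i
    constructor
    · rw [← hp i]; exact ENNReal.toReal_nonneg
    · rw [← hp i]
      have h1 : μ {ω | X i ω = 1} ≤ 1 := prob_le_one
      calc (μ {ω | X i ω = 1}).toReal ≤ (1 : ℝ≥0∞).toReal :=
        ENNReal.toReal_mono ENNReal.one_ne_top h1
      _ = 1 := by simp
  set val : (Fin n → Bool) → (Fin n → ℝ) := fun σ i => if σ i then 1 else 0 with hvaldef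
  set F : (Fin n → Bool) → ℝ := fun σ => f (val σ) with hFdef
  have hval_upd : ∀ (σ : Fin n → Bool) (i : Fin n) (b : Bool),
      val (Function.update σ i b) = Function.update (val σ) i (if b then 1 else 0) := by
    intro σ i b
    funext j
    by_cases hj : j = i
    · subst hj; simp [hvaldef]
    · simp [hvaldef, Function.update_of_ne hj]
  have FL : ∀ (i : Fin n) (σ : Fin n → Bool),
      |F (Function.update σ i true) - F (Function.update σ i false)| ≤ d i := by
    intro i σ
    rw [hFdef]
    simp only
    rw [hval_upd σ i true, hval_upd σ i false]
    apply hLip _ _ i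
    intro j hj
    rw [Function.update_of_ne hj, Function.update_of_ne hj]
  have Fv : ∀ (i : Fin n) (σ : Fin n → Bool),
      p i * (1 - p i) * (F (Function.update σ i true) - F (Function.update σ i false)) ^ 2
        ≤ lam i := by
    intro i σ
    rw [hFdef]
    simp only
    rw [hval_upd σ i true, hval_upd σ i false]
    have := hvar i (val σ) (fun j => by by_cases h : σ j <;> simp [hvaldef, h])
    simpa using this
  -- the atoms
  set E : (Fin n → Bool) → Set Ω := fun σ => ⋂ i, X i ⁻¹' {val σ i} with hEdef
  have hEmeas : ∀ σ, MeasurableSet (E σ) :=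
    fun σ => MeasurableSet.iInter (fun i => (hmeas i) (measurableSet_singleton _))
  set smap : Ω → (Fin n → Bool) := fun ω i => if X i ω = 1 then true else false with hsmapdef
  have hXval : ∀ ω, (fun i => X i ω) = val (smap ω) := by
    intro ω
    funext i
    rcases h01 i ω with h | h <;> simp [hvaldef, hsmapdef, h]
  have hmemE : ∀ ω σ, ω ∈ E σ ↔ smap ω = σ := by
    intro ω σ
    constructor
    · intro hω
      funext i
      have hi : X i ω = val σ i := by
        have := Set.mem_iInter.1 hω i
        simpa using this
      cases hσi : σ i
      · have hi0 : X i ω = 0 := by rw [hi, hvaldef]; simp [hσi]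
        simp [hsmapdef, hi0]
      · have hi1 : X i ω = 1 := by rw [hi, hvaldef]; simp [hσi]
        simp [hsmapdef, hi1]
    · rintro rfl
      apply Set.mem_iInter.2
      intro i
      simp only [Set.mem_preimage, Set.mem_singleton_iff]
      exact congrFun (hXval ω) i
  have hμE : ∀ σ, (μ (E σ)).toReal = Wt p σ := by
    intro σ
    have hprod : μ (E σ) = ∏ i, μ (X i ⁻¹' {val σ i}) := by
      apply hind.meas_iInter
      intro i
      exact ⟨{val σ i}, measurableSet_singleton _, rfl⟩
    rw [hprod, ENNReal.toReal_prod, Wt]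
    apply Finset.prod_congr rfl
    intro i _
    have hone : X i ⁻¹' {(1:ℝ)} = {ω | X i ω = 1} := by ext ω; simp
    have hzero : X i ⁻¹' {(0:ℝ)} = {ω | X i ω = 0} := by ext ω; simp
    have hsum : (μ {ω | X i ω = 0}).toReal + (μ {ω | X i ω = 1}).toReal = 1 := by
      have hdisj : Disjoint {ω | X i ω = 0} {ω | X i ω = 1} := by
        rw [Set.disjoint_left]
        intro ω h0 h1
        simp only [Set.mem_setOf_eq] at h0 h1
        rw [h0] at h1; norm_num at h1
      have hunion : {ω | X i ω = 0} ∪ {ω | X i ω = 1} = Set.univ := by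
        ext ω; simp only [Set.mem_union, Set.mem_setOf_eq, Set.mem_univ, iff_true]
        exact h01 i ω
      have hm1 : MeasurableSet {ω | X i ω = 1} := by
        rw [← hone]; exact (hmeas i) (measurableSet_singleton _)
      have := measure_union (μ := μ) hdisj hm1
      rw [hunion, measure_univ] at this
      rw [← ENNReal.toReal_add (measure_ne_top μ _) (measure_ne_top μ _), ← this]
      simp
    cases hσ : σ i
    · have hv0 : val σ i = 0 := by rw [hvaldef]; simp [hσ]
      rw [hv0, hzero]
      norm_num
      rw [← hp i]
      linarith
    · have hv1 : val σ i = 1 := by rw [hvaldef]; simp [hσ]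
      rw [hv1, hone]
      simp only [if_pos rfl]
      exact hp i
  -- integral identity
  have hrepr : ∀ ω, f (fun i => X i ω) = ∑ σ, Set.indicator (E σ) (fun _ => F σ) ω := by
    intro ω
    rw [Finset.sum_eq_single (smap ω)]
    · rw [Set.indicator_of_mem ((hmemE ω (smap ω)).2 rfl)]
      rw [hFdef]
      exact congrArg f (hXval ω)
    · intro σ _ hσ
      exact Set.indicator_of_notMem (fun h => hσ ((hmemE ω σ).1 h).symm) _
    · intro h
      exact absurd (Finset.mem_univ _) h
  have hInt : ∫ ω, f (fun i => X i ω) ∂μ = ∑ σ, Wt p σ * F σ := by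
    have hfeq : (fun ω => f (fun i => X i ω))
        = fun ω => ∑ σ, Set.indicator (E σ) (fun _ => F σ) ω := funext hrepr
    rw [hfeq]
    rw [integral_finset_sum _ (fun σ _ => ((integrable_const (F σ)).indicator (hEmeas σ)))]
    refine Finset.sum_congr rfl (fun σ _ => ?_)
    rw [integral_indicator_const _ (hEmeas σ), smul_eq_mul, measureReal_def, hμE σ]
  set m := ∫ ω', f (fun i => X i ω') ∂μ with hmdef
  set bad := Finset.univ.filter (fun σ => (∑ τ, Wt p τ * F τ) + t ≤ F σ) with hbad
  have hTset : {ω | m + t ≤ f (fun i => X i ω)} = ⋃ σ ∈ bad, E σ := by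
    ext ω
    simp only [Set.mem_setOf_eq, Set.mem_iUnion]
    constructor
    · intro hω
      refine ⟨smap ω, ?_, (hmemE ω _).2 rfl⟩
      rw [hbad]
      simp only [Finset.mem_filter]
      refine ⟨Finset.mem_univ _, ?_⟩
      rw [← hInt]
      have hFX : F (smap ω) = f (fun i => X i ω) := by
        rw [hFdef]; exact (congrArg f (hXval ω)).symm
      rw [hFX]
      exact hω
    · rintro ⟨σ, hσbad, hωE⟩
      have hsm : smap ω = σ := (hmemE ω σ).1 hωE
      rw [hbad] at hσbad
      simp only [Finset.mem_filter] at hσbad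
      have hFX : F σ = f (fun i => X i ω) := by
        rw [← hsm, hFdef]; exact (congrArg f (hXval ω)).symm
      rw [hInt]
      rw [← hFX]
      exact hσbad.2
  have hdisjE : (↑bad : Set (Fin n → Bool)).PairwiseDisjoint E := by
    intro σ _ σ' _ hne
    rw [Function.onFun, Set.disjoint_left]
    intro ω h1 h2
    exact hne (((hmemE ω σ).1 h1).symm.trans ((hmemE ω σ').1 h2))
  have hμT : (μ {ω | m + t ≤ f (fun i => X i ω)}).toReal = ∑ σ ∈ bad, Wt p σ := by
    rw [hTset, measure_biUnion_finset hdisjE (fun σ _ => hEmeas σ),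
      ENNReal.toReal_sum (fun σ _ => measure_ne_top μ _)]
    exact Finset.sum_congr rfl (fun σ _ => hμE σ)
  have hlamS0 : 0 ≤ lamS := by
    rw [hlamS]
    refine Finset.sum_nonneg (fun i _ => ?_)
    refine le_trans ?_ (hvar i (fun _ => 0) (fun j => Or.inl rfl))
    have h1 := (hp01 i).1
    have h2 := (hp01 i).2
    exact mul_nonneg (mul_nonneg h1 (by linarith)) (sq_nonneg _)
  have hkey : ∀ ε : ℝ, 0 < ε →
      (μ {ω | m + t ≤ f (fun i => X i ω)}).toReal
        ≤ Real.exp (-(t ^ 2) / (2 * lamS + 2 / 3 * t * (dmax + ε))) := by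
    intro ε hε
    rw [hμT]
    have hD : 0 < dmax + ε := by linarith
    have hres := discrete_tail n p lam hp01 F (dmax + ε) hD
      (fun i σ => le_trans (FL i σ) (by linarith [hdmax i])) Fv t ht
    rw [hlamS]
    exact hres
  rcases eq_or_lt_of_le (by positivity : (0:ℝ) ≤ 2 * lamS + 2 / 3 * t * dmax) with h0 | hpos
  · rw [← h0, div_zero, Real.exp_zero]
    calc (μ {ω | m + t ≤ f (fun i => X i ω)}).toReal ≤ (1 : ℝ≥0∞).toReal :=
      ENNReal.toReal_mono ENNReal.one_ne_top prob_le_one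
    _ = 1 := by simp
  · have hc : Continuous (fun ε : ℝ => 2 * lamS + 2 / 3 * t * (dmax + ε)) :=
      continuous_const.add (continuous_const.mul (continuous_const.add continuous_id))
    have h1 : Tendsto (fun ε : ℝ => 2 * lamS + 2 / 3 * t * (dmax + ε)) (nhds 0)
        (nhds (2 * lamS + 2 / 3 * t * dmax)) := hc.tendsto' 0 _ (by ring)
    have h2 : Tendsto (fun ε : ℝ => -(t ^ 2) / (2 * lamS + 2 / 3 * t * (dmax + ε))) (nhds 0)
        (nhds (-(t ^ 2) / (2 * lamS + 2 / 3 * t * dmax))) :=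
      tendsto_const_nhds.div h1 (ne_of_gt hpos)
    have h3 := (Real.continuous_exp.tendsto _).comp h2
    refine ge_of_tendsto
      (h3.mono_left (nhdsWithin_le_nhds (s := Set.Ioi (0:ℝ)) (a := (0:ℝ)))) ?_
    filter_upwards [self_mem_nhdsWithin] with ε hε
    exact hkey ε hε

/-- method of bounded variances: let `f` be a function of `n` mutually
independent `{0,1}`-valued random variables `X i` with `Pr[X i = 1] = p i`, satisfying the
Lipschitz property with constants `d i`, and such that each conditional variance given the
other coordinates (which for binary `X i` equals
`p i (1 - p i) (f(a[i ↦ 1]) - f(a[i ↦ 0]))²`) is at most `lam i`. With `lamS = ∑ lam i`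
and `dmax ≥ d i` for all `i`, for every `t > 0` both tails of `f` beyond `t` have
probability at most `exp(-t²/(2·lamS + (2/3)·t·dmax))`. -/
theorem bounded_variances_inequality
    {Ω : Type*} [MeasurableSpace Ω] (μ : Measure Ω) [IsProbabilityMeasure μ]
    (n : ℕ) (X : Fin n → Ω → ℝ) (f : (Fin n → ℝ) → ℝ)
    (d lam p : Fin n → ℝ)
    (hmeas : ∀ i, Measurable (X i))
    (h01 : ∀ i ω, X i ω = 0 ∨ X i ω = 1)
    (hind : ProbabilityTheory.iIndepFun X μ)
    (hp : ∀ i, (μ {ω | X i ω = 1}).toReal = p i)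
    (hLip : ∀ (a a' : Fin n → ℝ) (i : Fin n),
      (∀ j, j ≠ i → a j = a' j) → |f a - f a'| ≤ d i)
    (hvar : ∀ (i : Fin n) (a : Fin n → ℝ), (∀ j, a j = 0 ∨ a j = 1) →
      p i * (1 - p i) * (f (Function.update a i 1) - f (Function.update a i 0)) ^ 2 ≤ lam i)
    (lamS dmax : ℝ) (hlamS : lamS = ∑ i, lam i) (hdmax : ∀ i, d i ≤ dmax)
    (t : ℝ) (ht : 0 < t) :
    (μ {ω | (∫ ω', f (fun i => X i ω') ∂μ) + t ≤ f (fun i => X i ω)}).toReal ≤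
        Real.exp (-(t ^ 2) / (2 * lamS + 2 / 3 * t * dmax)) ∧
    (μ {ω | f (fun i => X i ω) ≤ (∫ ω', f (fun i => X i ω') ∂μ) - t}).toReal ≤
        Real.exp (-(t ^ 2) / (2 * lamS + 2 / 3 * t * dmax)) := by
  constructor
  · exact main_tail μ n X f d lam p hmeas h01 hind hp hLip hvar lamS dmax hlamS hdmax t ht
  · have hLipg : ∀ (a a' : Fin n → ℝ) (i : Fin n),
        (∀ j, j ≠ i → a j = a' j) → |(fun a => -f a) a - (fun a => -f a) a'| ≤ d i := by
      intro a a' i hj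
      simp only
      rw [show -f a - -f a' = f a' - f a by ring, abs_sub_comm]
      exact hLip a a' i hj
    have hvarg : ∀ (i : Fin n) (a : Fin n → ℝ), (∀ j, a j = 0 ∨ a j = 1) →
        p i * (1 - p i) * ((fun a => -f a) (Function.update a i 1)
          - (fun a => -f a) (Function.update a i 0)) ^ 2 ≤ lam i := by
      intro i a ha
      simp only
      rw [show -f (Function.update a i 1) - -f (Function.update a i 0)
        = -(f (Function.update a i 1) - f (Function.update a i 0)) by ring, neg_sq]
      exact hvar i a ha
    have h := main_tail μ n X (fun a => -f a) d lam p hmeas h01 hind hp hLipg hvarg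
      lamS dmax hlamS hdmax t ht
    have hint : (∫ ω', -f (fun i => X i ω') ∂μ) = -∫ ω', f (fun i => X i ω') ∂μ :=
      integral_neg _
    rw [hint] at h
    have hseteq : {ω | f (fun i => X i ω) ≤ (∫ ω', f (fun i => X i ω') ∂μ) - t}
        = {ω | (-∫ ω', f (fun i => X i ω') ∂μ) + t ≤ -f (fun i => X i ω)} := by
      ext ω
      simp only [Set.mem_setOf_eq]
      constructor <;> intro <;> linarith
    rw [hseteq]
    exact h
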